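/- arXiv:math/0506048 — 2 statements merged into one kernel-verified Lean document; each statement's English description precedes it below -/
import Mathlib

section
/- A ±1 sequence of length n whose periodic autocorrelation satisfies θ(t) = 0 for all t ≢ 0 (mod n) (a perfect binary sequence) must have n = 4u² for some integer u; in particular n is divisible by 4 when n > 1. -/
open Finset

-- cyclic shift invariance of sums
lemma shift_sum (n : ℕ) (f : ℕ → ℤ) (k : ℕ) :
    ∑ t ∈ Finset.range n, f ((k + t) % n) = ∑ t ∈ Finset.range n, f (t % n) := by
  induction k with
  | zero => simp
  | succ k ih =>
    have h1 : ∑ t ∈ Finset.range n, f ((k + 1 + t) % n)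
        = ∑ t ∈ Finset.range n, f ((k + (t + 1)) % n) := by
      apply Finset.sum_congr rfl
      intro t _
      ring_nf
    rw [h1, ← ih]
    have H : ∀ t, f ((k + (t + 1)) % n) = (fun t => f ((k + t) % n)) (t + 1) := fun t => rfl
    rcases Nat.eq_zero_or_pos n with h | h
    · simp [h]
    · have h2 : ∑ t ∈ Finset.range n, f ((k + (t + 1)) % n)
          = (∑ t ∈ Finset.range (n + 1), f ((k + t) % n)) - f ((k + 0) % n) := by
        rw [Finset.sum_range_succ' (fun t => f ((k + t) % n)) n]
        ring
      rw [h2, Finset.sum_range_succ]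
      rw [Nat.add_zero, Nat.add_mod_right]
      ring

theorem perfect_binary_sequence_length (n : ℕ) (hn : 1 < n) (s : ℕ → ℤ)
    (hs : ∀ k < n, s k = 1 ∨ s k = -1)
    (hperf : ∀ t, 0 < t → t < n →
      ∑ k ∈ Finset.range n, s k * s ((k + t) % n) = 0) :
    (∃ u : ℕ, n = 4 * u ^ 2) ∧ 4 ∣ n := by
  set S : ℤ := ∑ k ∈ Finset.range n, s k with hS
  -- θ(0) = n
  have theta0 : ∑ k ∈ Finset.range n, s k * s ((k + 0) % n) = (n : ℤ) := by
    rw [show ((n:ℤ)) = ∑ _k ∈ Finset.range n, (1:ℤ) by simp]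
    apply Finset.sum_congr rfl
    intro k hk
    rw [Finset.mem_range] at hk
    rw [Nat.add_zero, Nat.mod_eq_of_lt hk]
    rcases hs k hk with h | h <;> rw [h] <;> ring
  -- S^2 = n
  have key : S ^ 2 = (n : ℤ) := by
    have hsum : ∑ t ∈ Finset.range n, ∑ k ∈ Finset.range n, s k * s ((k + t) % n) = (n : ℤ) := by
      rw [Finset.sum_eq_single_of_mem 0 (Finset.mem_range.mpr (by omega))]
      · exact theta0
      · intro t ht htne
        exact hperf t (Nat.pos_of_ne_zero htne) (Finset.mem_range.mp ht)
    rw [Finset.sum_comm] at hsum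
    have h2 : ∀ k ∈ Finset.range n, ∑ t ∈ Finset.range n, s k * s ((k + t) % n) = s k * S := by
      intro k _
      rw [← Finset.mul_sum, shift_sum n s k]
      congr 1
      apply Finset.sum_congr rfl
      intro t ht
      rw [Nat.mod_eq_of_lt (Finset.mem_range.mp ht)]
    rw [Finset.sum_congr rfl h2, ← Finset.sum_mul, ← hS] at hsum
    rw [sq]; exact hsum
  -- parity of n from θ(1) = 0
  have hne : (0 : ℤ) % 2 = (n : ℤ) % 2 := by
    have h1 := hperf 1 one_pos hn
    calc (0:ℤ) % 2 = (∑ k ∈ Finset.range n, s k * s ((k + 1) % n)) % 2 := by rw [h1]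
      _ = (∑ k ∈ Finset.range n, (s k * s ((k + 1) % n)) % 2) % 2 := Finset.sum_int_mod _ _ _
      _ = (∑ _k ∈ Finset.range n, (1:ℤ)) % 2 := by
          congr 1
          apply Finset.sum_congr rfl
          intro k hk
          rw [Finset.mem_range] at hk
          have h2 : (k + 1) % n < n := Nat.mod_lt _ (by omega)
          rcases hs k hk with h | h <;> rcases hs _ h2 with h' | h' <;> rw [h, h'] <;> decide
      _ = (n : ℤ) % 2 := by simp
  have hSmod : S % 2 = (n : ℤ) % 2 := by
    calc S % 2 = (∑ k ∈ Finset.range n, s k % 2) % 2 := Finset.sum_int_mod _ _ _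
      _ = (∑ _k ∈ Finset.range n, (1:ℤ)) % 2 := by
          congr 1
          apply Finset.sum_congr rfl
          intro k hk
          rcases hs k (Finset.mem_range.mp hk) with h | h <;> rw [h] <;> decide
      _ = (n : ℤ) % 2 := by simp
  -- S is even
  have hSeven : S % 2 = 0 := by omega
  obtain ⟨m, hm⟩ : (2 : ℤ) ∣ S := Int.dvd_of_emod_eq_zero hSeven
  have hn4 : (n : ℤ) = 4 * m ^ 2 := by rw [← key, hm]; ring
  refine ⟨⟨m.natAbs, ?_⟩, ?_⟩
  · have h2 : ((4 * m.natAbs ^ 2 : ℕ) : ℤ) = (n : ℤ) := by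
      push_cast [Nat.cast_natAbs]
      rw [hn4, sq_abs]
    exact_mod_cast h2.symm
  · have : (4 : ℤ) ∣ (n : ℤ) := ⟨m ^ 2, hn4⟩
    exact_mod_cast this
end

section
/- For odd n, the sequence s_k = e^{iπk(k+1)/n}, k = 0,...,n-1, is a perfect sequence: its periodic autocorrelation satisfies θ(t) = Σ_{k=0}^{n-1} s_k · conj(s_{(k+t) mod n}) = 0 for all t ≢ 0 (mod n). -/
open Finset Complex Real

theorem turyn_perfect_sequence (n : ℕ) (hn : 0 < n) (hodd : Odd n) :
    ∀ t : ℕ, 0 < t → t < n →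
      ∑ k ∈ Finset.range n,
          Complex.exp (Real.pi * Complex.I * k * (k + 1) / n) *
            (starRingEnd ℂ) (Complex.exp (Real.pi * Complex.I * (k + t) * (k + t + 1) / n)) = 0 := by
  intro t ht htn
  have hn0 : (n : ℂ) ≠ 0 := Nat.cast_ne_zero.mpr hn.ne'
  have key : ∀ k : ℕ,
      Complex.exp (Real.pi * Complex.I * k * (k + 1) / n) *
        (starRingEnd ℂ) (Complex.exp (Real.pi * Complex.I * (k + t) * (k + t + 1) / n))
      = Complex.exp (-(Real.pi * Complex.I * t * (t + 1) / n)) *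
        Complex.exp (-(2 * Real.pi * Complex.I * t / n)) ^ k := by
    intro k
    rw [← Complex.exp_conj, ← Complex.exp_nat_mul, ← Complex.exp_add, ← Complex.exp_add]
    congr 1
    have hc : (starRingEnd ℂ) ((Real.pi : ℂ) * Complex.I * (↑k + ↑t) * (↑k + ↑t + 1) / ↑n)
        = (Real.pi : ℂ) * (-Complex.I) * (↑k + ↑t) * (↑k + ↑t + 1) / ↑n := by
      simp [map_div₀, map_mul, Complex.conj_ofReal]
    rw [hc]
    field_simp
    ring
  simp only [key]
  rw [← Finset.mul_sum]
  have h2 : (2 : ℂ) * Real.pi * Complex.I ≠ 0 := by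
    simp [Complex.I_ne_zero, Real.pi_ne_zero]
  have hω1 : Complex.exp (-(2 * Real.pi * Complex.I * t / n)) ≠ 1 := by
    intro h
    rw [Complex.exp_eq_one_iff] at h
    obtain ⟨m, hm⟩ := h
    have hc : -(t : ℂ) = m * n := by
      field_simp at hm
      apply mul_left_cancel₀ h2
      linear_combination (2 * Real.pi * Complex.I) * hm
    have hz : -(t : ℤ) = m * n := by exact_mod_cast hc
    have hdvd : (n : ℤ) ∣ (t : ℤ) := ⟨-m, by linear_combination -hz⟩
    have : n ∣ t := by exact_mod_cast hdvd
    have := Nat.le_of_dvd ht this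
    omega
  have hpow : Complex.exp (-(2 * Real.pi * Complex.I * t / n)) ^ n = 1 := by
    rw [← Complex.exp_nat_mul]
    have : (n : ℂ) * -(2 * Real.pi * Complex.I * t / n) = (-(t : ℤ)) * (2 * Real.pi * Complex.I) := by
      field_simp
      push_cast
      ring
    rw [this]
    exact_mod_cast Complex.exp_int_mul_two_pi_mul_I (-(t:ℤ))
  rw [geom_sum_eq hω1, hpow]
  simp
end
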